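/- arXiv:2203.13805 — 5 statements merged into one kernel-verified Lean document; each statement's English description precedes it below -/
import Mathlib

section
/- Pathwise Bessel comparison, integral form (from the proof of Lemma 2.1 of the paper): let T > 0, let d, d' ∈ ℝ with d ≤ d' and d' ≥ 1, let x > 0, and let B : [0,T] → ℝ be continuous. Let Z be a pathwise Bessel-type solution of dimension d and Z' a pathwise Bessel-type solution of dimension d', both driven by B with initial value x, and suppose Z_t ≤ Z'_t for all t ∈ [0,T]. Then 0 ≤ sup_{t ∈ [0,T]} (Z'_t − Z_t) ≤ ((d' − d)/2) · ∫_0^T Z_s^{-1} ds. -/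
open MeasureTheory intervalIntegral

/-- A pathwise Bessel-type solution of dimension `d` driven by a continuous function
`B : [0,T] → ℝ` with initial value `x > 0`: a continuous positive function `Z` on `[0,T]`
satisfying `Z t = x + ((d-1)/2) ∫_0^t Z s⁻¹ ds + B t`. -/
def IsBesselSolution (T x d : ℝ) (B Z : ℝ → ℝ) : Prop :=
  ContinuousOn Z (Set.Icc 0 T) ∧ (∀ t ∈ Set.Icc 0 T, 0 < Z t) ∧
    ∀ t ∈ Set.Icc 0 T, Z t = x + (d - 1) / 2 * (∫ s in (0 : ℝ)..t, (Z s)⁻¹) + B t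

/-- **Pathwise Bessel comparison, integral form** (from the proof of Lemma 2.1): if `d ≤ d'`,
`d' ≥ 1`, and `Z ≤ Z'` are Bessel-type solutions of dimensions `d`, `d'` driven by the same
continuous `B` with the same initial value `x > 0`, then
`0 ≤ sup_{[0,T]} (Z' - Z) ≤ ((d'-d)/2) ∫_0^T Z_s⁻¹ ds`. -/
theorem bessel_comparison_integral (T d d' x : ℝ) (hT : 0 < T) (hdd : d ≤ d') (hd' : 1 ≤ d')
    (hx : 0 < x) (B Z Z' : ℝ → ℝ) (hB : ContinuousOn B (Set.Icc 0 T))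
    (hZ : IsBesselSolution T x d B Z) (hZ' : IsBesselSolution T x d' B Z')
    (hle : ∀ t ∈ Set.Icc 0 T, Z t ≤ Z' t) :
    0 ≤ sSup ((fun t => Z' t - Z t) '' Set.Icc 0 T) ∧
      sSup ((fun t => Z' t - Z t) '' Set.Icc 0 T) ≤
        (d' - d) / 2 * ∫ s in (0 : ℝ)..T, (Z s)⁻¹ := by
  obtain ⟨hZc, hZpos, hZeq⟩ := hZ
  obtain ⟨hZ'c, hZ'pos, hZ'eq⟩ := hZ'
  -- continuity of inverses
  have hZinv : ContinuousOn (fun s => (Z s)⁻¹) (Set.Icc 0 T) :=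
    hZc.inv₀ fun s hs => (hZpos s hs).ne'
  have hZ'inv : ContinuousOn (fun s => (Z' s)⁻¹) (Set.Icc 0 T) :=
    hZ'c.inv₀ fun s hs => (hZ'pos s hs).ne'
  -- integrability on subintervals
  have hint : ∀ a b : ℝ, a ∈ Set.Icc 0 T → b ∈ Set.Icc 0 T →
      IntervalIntegrable (fun s => (Z s)⁻¹) volume a b := by
    intro a b ha hb
    apply (hZinv.mono _).intervalIntegrable
    exact Set.uIcc_subset_Icc ha hb
  have hint' : ∀ a b : ℝ, a ∈ Set.Icc 0 T → b ∈ Set.Icc 0 T →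
      IntervalIntegrable (fun s => (Z' s)⁻¹) volume a b := by
    intro a b ha hb
    apply (hZ'inv.mono _).intervalIntegrable
    exact Set.uIcc_subset_Icc ha hb
  have h0T : (0 : ℝ) ∈ Set.Icc 0 T := ⟨le_rfl, hT.le⟩
  have hTT : T ∈ Set.Icc 0 T := ⟨hT.le, le_rfl⟩
  set M := (d' - d) / 2 * ∫ s in (0 : ℝ)..T, (Z s)⁻¹ with hM
  -- key bound
  have key : ∀ t ∈ Set.Icc 0 T, Z' t - Z t ≤ M := by
    intro t ht
    have ht' : ∀ s ∈ Set.Icc 0 t, s ∈ Set.Icc 0 T :=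
      fun s hs => ⟨hs.1, hs.2.trans ht.2⟩
    have h1 : (∫ s in (0:ℝ)..t, (Z' s)⁻¹) ≤ ∫ s in (0:ℝ)..t, (Z s)⁻¹ := by
      apply intervalIntegral.integral_mono_on ht.1 (hint' 0 t h0T ht) (hint 0 t h0T ht)
      intro s hs
      exact inv_anti₀ (hZpos s (ht' s hs)) (hle s (ht' s hs))
    have h2 : (∫ s in (0:ℝ)..t, (Z s)⁻¹) ≤ ∫ s in (0:ℝ)..T, (Z s)⁻¹ := by
      have hsplit : (∫ s in (0:ℝ)..t, (Z s)⁻¹) + (∫ s in t..T, (Z s)⁻¹)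
          = ∫ s in (0:ℝ)..T, (Z s)⁻¹ :=
        intervalIntegral.integral_add_adjacent_intervals (hint 0 t h0T ht) (hint t T ht hTT)
      have hnn : 0 ≤ ∫ s in t..T, (Z s)⁻¹ := by
        apply intervalIntegral.integral_nonneg ht.2
        intro s hs
        exact (inv_pos.mpr (hZpos s ⟨ht.1.trans hs.1, hs.2⟩)).le
      linarith
    have hnn0t : 0 ≤ ∫ s in (0:ℝ)..t, (Z s)⁻¹ := by
      apply intervalIntegral.integral_nonneg ht.1
      intro s hs
      exact (inv_pos.mpr (hZpos s (ht' s hs))).le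
    have heq : Z' t - Z t
        = (d' - 1) / 2 * ((∫ s in (0:ℝ)..t, (Z' s)⁻¹) - ∫ s in (0:ℝ)..t, (Z s)⁻¹)
          + (d' - d) / 2 * ∫ s in (0:ℝ)..t, (Z s)⁻¹ := by
      rw [hZeq t ht, hZ'eq t ht]; ring
    have hfirst : (d' - 1) / 2 *
        ((∫ s in (0:ℝ)..t, (Z' s)⁻¹) - ∫ s in (0:ℝ)..t, (Z s)⁻¹) ≤ 0 :=
      mul_nonpos_of_nonneg_of_nonpos (by linarith) (by linarith)
    have hsecond : (d' - d) / 2 * (∫ s in (0:ℝ)..t, (Z s)⁻¹) ≤ M := by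
      rw [hM]
      exact mul_le_mul_of_nonneg_left h2 (by linarith)
    linarith
  have hbdd : BddAbove ((fun t => Z' t - Z t) '' Set.Icc 0 T) := by
    refine ⟨M, ?_⟩
    rintro y ⟨t, ht, rfl⟩
    exact key t ht
  have hmem : (0 : ℝ) ∈ (fun t => Z' t - Z t) '' Set.Icc 0 T := by
    refine ⟨0, h0T, ?_⟩
    have e1 := hZeq 0 h0T
    have e2 := hZ'eq 0 h0T
    simp only [intervalIntegral.integral_same] at e1 e2
    simp [e1, e2]
  constructor
  · exact le_csSup hbdd hmem
  · apply csSup_le ⟨0, hmem⟩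
    rintro y ⟨t, ht, rfl⟩
    exact key t ht
end

section
/- Pathwise Bessel comparison, Gronwall form (from the proof of Lemma 2.1 of the paper): let T > 0, let d, d' ∈ ℝ with d ≤ d', let x > 0, and let B : [0,T] → ℝ be continuous. Let Z be a pathwise Bessel-type solution of dimension d and Z' a pathwise Bessel-type solution of dimension d', both driven by B with initial value x, and suppose Z_t ≤ Z'_t for all t ∈ [0,T]. Set u := inf_{t ∈ [0,T]} Z_t and assume u > 0. Then 0 ≤ sup_{t ∈ [0,T]} (Z'_t − Z_t) ≤ exp(T·|1 − d'| / (2u²)) · ((d' − d)/2) · (T/u). -/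
open MeasureTheory intervalIntegral

/-- **Pathwise Bessel comparison, Gronwall form** (from the proof of Lemma 2.1): if `d ≤ d'`
and `Z ≤ Z'` are Bessel-type solutions of dimensions `d`, `d'` driven by the same continuous
`B` with the same initial value `x > 0`, and `u := inf_{[0,T]} Z > 0`, then
`0 ≤ sup_{[0,T]} (Z' - Z) ≤ exp(T|1-d'|/(2u²)) · ((d'-d)/2) · (T/u)`. -/
theorem bessel_comparison_gronwall (T d d' x : ℝ) (hT : 0 < T) (hdd : d ≤ d')
    (hx : 0 < x) (B Z Z' : ℝ → ℝ) (hB : ContinuousOn B (Set.Icc 0 T))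
    (hZ : IsBesselSolution T x d B Z) (hZ' : IsBesselSolution T x d' B Z')
    (hle : ∀ t ∈ Set.Icc 0 T, Z t ≤ Z' t)
    (u : ℝ) (hu : u = sInf (Z '' Set.Icc 0 T)) (hupos : 0 < u) :
    0 ≤ sSup ((fun t => Z' t - Z t) '' Set.Icc 0 T) ∧
      sSup ((fun t => Z' t - Z t) '' Set.Icc 0 T) ≤
        Real.exp (T * |1 - d'| / (2 * u ^ 2)) * ((d' - d) / 2) * (T / u) := by
  obtain ⟨hZc, hZpos, hZeq⟩ := hZ
  obtain ⟨hZ'c, hZ'pos, hZ'eq⟩ := hZ'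
  set K : ℝ := |1 - d'| / (2 * u ^ 2) with hKdef
  set C : ℝ := (d' - d) / 2 * (T / u) with hCdef
  have hK0 : 0 ≤ K := by positivity
  have hC0 : 0 ≤ C :=
    mul_nonneg (div_nonneg (sub_nonneg.2 hdd) (by norm_num)) (div_nonneg hT.le hupos.le)
  -- u is a lower bound
  have hbdd : BddBelow (Z '' Set.Icc 0 T) :=
    (isCompact_Icc.image_of_continuousOn hZc).bddBelow
  have huZ : ∀ s ∈ Set.Icc 0 T, u ≤ Z s := fun s hs => hu ▸ csInf_le hbdd ⟨s, hs, rfl⟩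
  have huZ' : ∀ s ∈ Set.Icc 0 T, u ≤ Z' s := fun s hs => (huZ s hs).trans (hle s hs)
  set f : ℝ → ℝ := fun t => Z' t - Z t with hfdef
  have hfc : ContinuousOn f (Set.Icc 0 T) := hZ'c.sub hZc
  have hf0 : ∀ t ∈ Set.Icc 0 T, 0 ≤ f t := fun t ht => sub_nonneg.2 (hle t ht)
  -- projection onto [0,T]
  set p : ℝ → ℝ := fun t => max 0 (min t T) with hpdef
  have hpc : Continuous p := continuous_const.max (continuous_id.min continuous_const)
  have hpmem : ∀ t, p t ∈ Set.Icc 0 T :=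
    fun t => ⟨le_max_left _ _, max_le hT.le (min_le_right _ _)⟩
  have hpeq : ∀ t ∈ Set.Icc 0 T, p t = t := by
    intro t ht
    simp only [hpdef, min_eq_left ht.2, max_eq_right ht.1]
  set ft : ℝ → ℝ := fun t => f (p t) with hftdef
  have hftc : Continuous ft := hfc.comp_continuous hpc hpmem
  have hfteq : ∀ t ∈ Set.Icc 0 T, ft t = f t := fun t ht => by
    simp only [hftdef, hpeq t ht]
  set F : ℝ → ℝ := fun t => ∫ s in (0:ℝ)..t, ft s with hFdef
  have hFeq : ∀ t ∈ Set.Icc 0 T, F t = ∫ s in (0:ℝ)..t, f s := by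
    intro t ht
    refine intervalIntegral.integral_congr ?_
    intro s hs
    rw [Set.uIcc_of_le ht.1] at hs
    exact hfteq s ⟨hs.1, hs.2.trans ht.2⟩
  have hFderiv : ∀ t, HasDerivAt F (ft t) t := fun t =>
    (hftc.integral_hasStrictDerivAt 0 t).hasDerivAt
  -- interval integrability helpers
  have hsub : ∀ t ∈ Set.Icc 0 T, Set.Icc 0 t ⊆ Set.Icc 0 T :=
    fun t ht => Set.Icc_subset_Icc le_rfl ht.2
  have hgc : ContinuousOn (fun s => (Z s)⁻¹) (Set.Icc 0 T) :=
    hZc.inv₀ (fun s hs => (hZpos s hs).ne')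
  have hg'c : ContinuousOn (fun s => (Z' s)⁻¹) (Set.Icc 0 T) :=
    hZ'c.inv₀ (fun s hs => (hZ'pos s hs).ne')
  have hii : ∀ (h : ℝ → ℝ), ContinuousOn h (Set.Icc 0 T) → ∀ t ∈ Set.Icc 0 T,
      IntervalIntegrable h volume 0 t := by
    intro h hh t ht
    exact (hh.mono (hsub t ht)).intervalIntegrable_of_Icc ht.1
  -- key pointwise bound : f t ≤ C + K * ∫₀ᵗ f
  have key : ∀ t ∈ Set.Icc 0 T, f t ≤ C + K * ∫ s in (0:ℝ)..t, f s := by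
    intro t ht
    have heq : f t = (d' - d) / 2 * (∫ s in (0:ℝ)..t, (Z s)⁻¹)
        + (d' - 1) / 2 * ((∫ s in (0:ℝ)..t, (Z' s)⁻¹) - ∫ s in (0:ℝ)..t, (Z s)⁻¹) := by
      simp only [hfdef]
      rw [hZeq t ht, hZ'eq t ht]; ring
    have h1 : (d' - d) / 2 * (∫ s in (0:ℝ)..t, (Z s)⁻¹) ≤ C := by
      have hA : (∫ s in (0:ℝ)..t, (Z s)⁻¹) ≤ t * u⁻¹ := by
        have := intervalIntegral.integral_mono_on ht.1 (hii _ hgc t ht)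
          (_root_.intervalIntegrable_const (c := u⁻¹)) (fun s hs => by
            exact inv_anti₀ hupos (huZ s (hsub t ht hs)))
        simpa using this
      calc (d' - d) / 2 * (∫ s in (0:ℝ)..t, (Z s)⁻¹)
          ≤ (d' - d) / 2 * (t * u⁻¹) :=
            mul_le_mul_of_nonneg_left hA (div_nonneg (sub_nonneg.2 hdd) (by norm_num))
        _ ≤ (d' - d) / 2 * (T / u) := by
            rw [div_eq_mul_inv T u]
            exact mul_le_mul_of_nonneg_left
              (mul_le_mul_of_nonneg_right ht.2 (inv_nonneg.2 hupos.le))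
              (div_nonneg (sub_nonneg.2 hdd) (by norm_num))
    have h2 : (d' - 1) / 2 * ((∫ s in (0:ℝ)..t, (Z' s)⁻¹) - ∫ s in (0:ℝ)..t, (Z s)⁻¹)
        ≤ K * ∫ s in (0:ℝ)..t, f s := by
      rw [← intervalIntegral.integral_sub (hii _ hg'c t ht) (hii _ hgc t ht),
        ← intervalIntegral.integral_const_mul, ← intervalIntegral.integral_const_mul]
      refine intervalIntegral.integral_mono_on ht.1 ?_ ?_ ?_
      · exact (((hg'c.sub hgc).const_smul ((d'-1)/2)).mono (hsub t ht)).intervalIntegrable_of_Icc ht.1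
      · exact ((hfc.const_smul K).mono (hsub t ht)).intervalIntegrable_of_Icc ht.1
      · intro s hs
        have hsT := hsub t ht hs
        have ha : 0 < Z s := hZpos s hsT
        have hb : 0 < Z' s := hZ'pos s hsT
        have hua := huZ s hsT
        have hub := huZ' s hsT
        have hab : Z s ≤ Z' s := hle s hsT
        have hinv : (Z s)⁻¹ - (Z' s)⁻¹ = f s / (Z s * Z' s) := by
          field_simp [hfdef]
          rfl
        calc (d' - 1) / 2 * ((Z' s)⁻¹ - (Z s)⁻¹)
            ≤ |d' - 1| / 2 * ((Z s)⁻¹ - (Z' s)⁻¹) := by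
              rw [← neg_sub ((Z s)⁻¹)]
              have h1 : (0:ℝ) ≤ (Z s)⁻¹ - (Z' s)⁻¹ := by
                rw [hinv]; exact div_nonneg (sub_nonneg.2 hab) (by positivity)
              nlinarith [le_abs_self (d' - 1), neg_abs_le (d' - 1)]
          _ ≤ |d' - 1| / 2 * (f s / u ^ 2) := by
              rw [hinv]
              refine mul_le_mul_of_nonneg_left ?_ (by positivity)
              have : u ^ 2 ≤ Z s * Z' s := by nlinarith
              exact div_le_div_of_nonneg_left (hf0 s hsT) (by positivity) this
          _ = K * f s := by
              rw [hKdef, abs_sub_comm 1 d']; ring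
    rw [heq]; exact add_le_add h1 h2
  -- Gronwall
  have hFnonneg : ∀ t ∈ Set.Icc 0 T, 0 ≤ F t := by
    intro t ht
    rw [hFeq t ht]
    exact intervalIntegral.integral_nonneg ht.1 (fun s hs => hf0 s (hsub t ht hs))
  have gron : ∀ t ∈ Set.Icc 0 T, ‖F t‖ ≤ gronwallBound 0 K C (t - 0) := by
    refine norm_le_gronwallBound_of_norm_deriv_right_le
      (f := F) (f' := ft) ((continuous_iff_continuousAt.2 fun t => (hFderiv t).continuousAt).continuousOn) ?_ ?_ ?_
    · exact fun t _ => (hFderiv t).hasDerivWithinAt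
    · simp [hFdef]
    · intro t ht
      have htT : t ∈ Set.Icc 0 T := ⟨ht.1, ht.2.le⟩
      rw [Real.norm_of_nonneg (hFnonneg t htT), Real.norm_of_nonneg
        ((hfteq t htT) ▸ hf0 t htT), hfteq t htT, hFeq t htT]
      linarith [key t htT]
  -- pointwise final bound
  have final : ∀ t ∈ Set.Icc 0 T, f t ≤ Real.exp (K * T) * C := by
    intro t ht
    have h1 : f t ≤ C + K * F t := by
      rw [hFeq t ht]; exact key t ht
    have h2 : F t ≤ gronwallBound 0 K C t := by
      have := gron t ht
      rwa [sub_zero, Real.norm_of_nonneg (hFnonneg t ht)] at this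
    rcases eq_or_ne K 0 with hK | hK
    · rw [hK] at h1 ⊢
      simpa using h1.trans (by simp)
    · have hKpos : 0 < K := lt_of_le_of_ne hK0 (Ne.symm hK)
      have hgb : gronwallBound 0 K C t = C / K * (Real.exp (K * t) - 1) := by
        rw [gronwallBound]; simp [hK]
      have hexp : Real.exp (K * t) ≤ Real.exp (K * T) :=
        Real.exp_le_exp.2 (mul_le_mul_of_nonneg_left ht.2 hK0)
      have : C + K * (C / K * (Real.exp (K * t) - 1)) = C * Real.exp (K * t) := by
        field_simp; ring
      nlinarith [h2, mul_le_mul_of_nonneg_left hexp hC0,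
        mul_le_mul_of_nonneg_left h2 hKpos.le]
  -- conclusion
  have hmem0 : f 0 ∈ (fun t => Z' t - Z t) '' Set.Icc 0 T :=
    ⟨0, Set.left_mem_Icc.2 hT.le, rfl⟩
  have hbddA : ∀ y ∈ (fun t => Z' t - Z t) '' Set.Icc 0 T,
      y ≤ Real.exp (T * |1 - d'| / (2 * u ^ 2)) * ((d' - d) / 2) * (T / u) := by
    rintro y ⟨t, ht, rfl⟩
    have := final t ht
    calc Z' t - Z t ≤ Real.exp (K * T) * C := this
      _ = Real.exp (T * |1 - d'| / (2 * u ^ 2)) * ((d' - d) / 2) * (T / u) := by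
          rw [hKdef, hCdef]; ring_nf
  constructor
  · refine le_csSup_of_le ⟨_, fun y hy => hbddA y hy⟩ hmem0 (hf0 0 (Set.left_mem_Icc.2 hT.le))
  · exact csSup_le ⟨f 0, hmem0⟩ hbddA
end

section
/- Pathwise continuity of Bessel processes in their dimension (pathwise form of Lemma 2.1 of the paper): let T > 0, x > 0, u > 0, let B : [0,T] → ℝ be continuous, let (d_n) be a sequence of real numbers converging to d* ∈ ℝ, let Z^{(n)} be a pathwise Bessel-type solution of dimension d_n and Z* a pathwise Bessel-type solution of dimension d*, all driven by B with initial value x. Assume that Z^{(n)}_t ≥ u and Z*_t ≥ u for all n and all t ∈ [0,T], and that for each n the solutions are ordered compatibly with their dimensions: if d_n ≤ d* then Z^{(n)}_t ≤ Z*_t for all t, and if d* ≤ d_n then Z*_t ≤ Z^{(n)}_t for all t. Then sup_{t ∈ [0,T]} |Z^{(n)}_t − Z*_t| → 0 as n → ∞. -/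
open MeasureTheory Filter

/-- **Pathwise continuity of Bessel processes in the dimension** (pathwise form of
Lemma 2.1): if `d n → d*`, the corresponding Bessel-type solutions `Z n` and `Z*` driven by
the same continuous `B` with the same initial value stay above `u > 0` on `[0,T]`, and the
solutions are ordered compatibly with their dimensions, then
`sup_{[0,T]} |Z n - Z*| → 0`. -/
theorem bessel_continuity_in_dimension (T x u : ℝ) (hT : 0 < T) (hx : 0 < x) (hu : 0 < u)
    (B : ℝ → ℝ) (hB : ContinuousOn B (Set.Icc 0 T))
    (d : ℕ → ℝ) (dstar : ℝ) (hd : Tendsto d atTop (nhds dstar))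
    (Z : ℕ → ℝ → ℝ) (Zstar : ℝ → ℝ)
    (hZ : ∀ n, IsBesselSolution T x (d n) B (Z n))
    (hZstar : IsBesselSolution T x dstar B Zstar)
    (hlb : ∀ n, ∀ t ∈ Set.Icc 0 T, u ≤ Z n t)
    (hlbstar : ∀ t ∈ Set.Icc 0 T, u ≤ Zstar t)
    (hord : ∀ n, (d n ≤ dstar → ∀ t ∈ Set.Icc 0 T, Z n t ≤ Zstar t) ∧
      (dstar ≤ d n → ∀ t ∈ Set.Icc 0 T, Zstar t ≤ Z n t)) :
    Tendsto (fun n => sSup ((fun t => |Z n t - Zstar t|) '' Set.Icc 0 T)) atTop (nhds 0) := by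
  -- clamp to [0, T]
  set c : ℝ → ℝ := fun s => max 0 (min s T) with hc
  have hcmem : ∀ s, c s ∈ Set.Icc 0 T := fun s =>
    ⟨le_max_left _ _, max_le hT.le (min_le_right _ _)⟩
  have hcid : ∀ s ∈ Set.Icc (0:ℝ) T, c s = s := by
    intro s hs
    simp only [hc]
    rw [min_eq_left hs.2, max_eq_right hs.1]
  have hccont : Continuous c := continuous_const.max (continuous_id.min continuous_const)
  -- clamped reciprocals
  set h : ℕ → ℝ → ℝ := fun n s => (Z n (c s))⁻¹ with hh
  set hs : ℝ → ℝ := fun s => (Zstar (c s))⁻¹ with hhs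
  have hcont : ∀ n, Continuous (h n) := by
    intro n
    exact (((hZ n).1.comp_continuous hccont hcmem)).inv₀
      (fun s => ((hZ n).2.1 _ (hcmem s)).ne')
  have hscont : Continuous hs :=
    ((hZstar.1.comp_continuous hccont hcmem)).inv₀
      (fun s => (hZstar.2.1 _ (hcmem s)).ne')
  -- uniform bound on |d n - 1|
  obtain ⟨M, hM⟩ := ((hd.sub_const 1).abs).bddAbove_range
  have hM' : ∀ n, |d n - 1| ≤ M := fun n => hM ⟨n, rfl⟩
  have hM0 : (0:ℝ) ≤ M := (abs_nonneg _).trans (hM' 0)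
  set K : ℝ := (M + 1) / (2 * u ^ 2) with hK
  have hKpos : 0 < K := by positivity
  set C : ℝ := (Real.exp (K * T) - 1) / K with hC
  have hC0 : 0 ≤ C := by
    apply div_nonneg _ hKpos.le
    have : (1:ℝ) ≤ Real.exp (K * T) := by
      rw [← Real.exp_zero]
      exact Real.exp_le_exp.mpr (by positivity)
    linarith
  -- key pathwise Grönwall estimate
  have key : ∀ n, ∀ t ∈ Set.Icc (0:ℝ) T,
      |Z n t - Zstar t| ≤ |d n - dstar| / (2 * u) * C := by
    intro n
    set G : ℝ → ℝ := fun t =>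
      (d n - 1) / 2 * (∫ s in (0:ℝ)..t, h n s) - (dstar - 1) / 2 * (∫ s in (0:ℝ)..t, hs s)
      with hG
    set G' : ℝ → ℝ := fun t => (d n - 1) / 2 * h n t - (dstar - 1) / 2 * hs t with hG'
    have hderiv : ∀ t, HasDerivAt G (G' t) t := by
      intro t
      exact ((((hcont n).integral_hasStrictDerivAt 0 t).hasDerivAt.const_mul _).sub
        (((hscont).integral_hasStrictDerivAt 0 t).hasDerivAt.const_mul _))
    have hGcont : Continuous G := by
      rw [continuous_iff_continuousAt]; exact fun t => (hderiv t).continuousAt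
    -- G agrees with Z n - Zstar on [0, T]
    have hEq : ∀ t ∈ Set.Icc (0:ℝ) T, Z n t - Zstar t = G t := by
      intro t ht
      have hsub : Set.uIcc (0:ℝ) t ⊆ Set.Icc 0 T := by
        rw [Set.uIcc_of_le ht.1]
        exact Set.Icc_subset_Icc le_rfl ht.2
      have h1 : (∫ s in (0:ℝ)..t, (Z n s)⁻¹) = ∫ s in (0:ℝ)..t, h n s := by
        apply intervalIntegral.integral_congr
        intro s hsm
        simp only [hh]
        rw [hcid s (hsub hsm)]
      have h2 : (∫ s in (0:ℝ)..t, (Zstar s)⁻¹) = ∫ s in (0:ℝ)..t, hs s := by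
        apply intervalIntegral.integral_congr
        intro s hsm
        simp only [hhs]
        rw [hcid s (hsub hsm)]
      rw [(hZ n).2.2 t ht, hZstar.2.2 t ht, h1, h2]
      simp only [hG]; ring
    have hG0 : G 0 = 0 := by
      have := (hEq 0 ⟨le_rfl, hT.le⟩).symm
      have h0 : Z n 0 - Zstar 0 = 0 := by
        rw [(hZ n).2.2 0 ⟨le_rfl, hT.le⟩, hZstar.2.2 0 ⟨le_rfl, hT.le⟩]
        simp
      linarith [hEq 0 ⟨le_rfl, hT.le⟩]
    set ε : ℝ := |d n - dstar| / (2 * u) with hε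
    have hε0 : 0 ≤ ε := by positivity
    have gron : ∀ t ∈ Set.Icc (0:ℝ) T, ‖G t‖ ≤ gronwallBound 0 K ε (t - 0) := by
      apply norm_le_gronwallBound_of_norm_deriv_right_le hGcont.continuousOn
        (fun t _ => (hderiv t).hasDerivWithinAt)
      · rw [hG0]; simp
      · intro t htm
        have ht : t ∈ Set.Icc (0:ℝ) T := ⟨htm.1, htm.2.le⟩
        have hct : c t = t := hcid t ht
        have hZnu : u ≤ Z n t := hlb n t ht
        have hZsu : u ≤ Zstar t := hlbstar t ht
        have hZnp : 0 < Z n t := hu.trans_le hZnu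
        have hZsp : 0 < Zstar t := hu.trans_le hZsu
        have hGt : |G t| = |Z n t - Zstar t| := by rw [hEq t ht]
        have hrw : G' t = (d n - 1) / 2 * ((Z n t)⁻¹ - (Zstar t)⁻¹)
            + (d n - dstar) / 2 * (Zstar t)⁻¹ := by
          simp only [hG', hh, hhs, hct]; ring
        rw [Real.norm_eq_abs, hrw]
        have hb1 : |(d n - 1) / 2 * ((Z n t)⁻¹ - (Zstar t)⁻¹)| ≤ K * |G t| := by
          rw [abs_mul, hGt]
          have hd1 : |(Z n t)⁻¹ - (Zstar t)⁻¹| = |Z n t - Zstar t| / (Z n t * Zstar t) := by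
            rw [inv_sub_inv hZnp.ne' hZsp.ne', abs_div, abs_sub_comm,
              abs_of_pos (mul_pos hZnp hZsp)]
          rw [hd1]
          have huu : u ^ 2 ≤ Z n t * Zstar t := by
            rw [sq]; exact mul_le_mul hZnu hZsu hu.le hZnp.le
          have hfrac : |Z n t - Zstar t| / (Z n t * Zstar t) ≤ |Z n t - Zstar t| / u ^ 2 :=
            div_le_div_of_nonneg_left (abs_nonneg _) (by positivity) huu
          calc |(d n - 1) / 2| * (|Z n t - Zstar t| / (Z n t * Zstar t))
              ≤ ((M + 1) / 2) * (|Z n t - Zstar t| / u ^ 2) := by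
                apply mul_le_mul _ hfrac (by positivity) (by positivity)
                rw [abs_div, abs_two]
                linarith [hM' n]
            _ = K * |Z n t - Zstar t| := by rw [hK]; ring
        have hb2 : |(d n - dstar) / 2 * (Zstar t)⁻¹| ≤ ε := by
          rw [abs_mul, abs_div, abs_two, abs_inv, abs_of_pos hZsp, hε]
          have : (Zstar t)⁻¹ ≤ u⁻¹ := inv_anti₀ hu hZsu
          calc |d n - dstar| / 2 * (Zstar t)⁻¹ ≤ |d n - dstar| / 2 * u⁻¹ := by
                apply mul_le_mul_of_nonneg_left this (by positivity)
            _ = |d n - dstar| / (2 * u) := by field_simp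
        calc |(d n - 1) / 2 * ((Z n t)⁻¹ - (Zstar t)⁻¹) + (d n - dstar) / 2 * (Zstar t)⁻¹|
            ≤ |(d n - 1) / 2 * ((Z n t)⁻¹ - (Zstar t)⁻¹)| + |(d n - dstar) / 2 * (Zstar t)⁻¹| :=
              abs_add_le _ _
          _ ≤ K * |G t| + ε := add_le_add hb1 hb2
          _ = K * ‖G t‖ + ε := by rw [Real.norm_eq_abs]
    intro t ht
    have := gron t ht
    rw [Real.norm_eq_abs] at this
    rw [hEq t ht]
    refine this.trans ?_
    rw [gronwallBound_of_K_ne_0 hKpos.ne', hC]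
    have hexp : Real.exp (K * (t - 0)) ≤ Real.exp (K * T) :=
      Real.exp_le_exp.mpr (mul_le_mul_of_nonneg_left (by linarith [ht.2]) hKpos.le)
    have : ε / K * (Real.exp (K * (t - 0)) - 1) ≤ ε / K * (Real.exp (K * T) - 1) := by
      apply mul_le_mul_of_nonneg_left (by linarith) (by positivity)
    simpa [hε, div_mul_eq_mul_div, mul_div_assoc, mul_comm, mul_left_comm] using this.trans_eq
      (by rw [hε]; ring)
  -- conclude by squeezing
  apply squeeze_zero
  · intro n
    exact Real.sSup_nonneg (by rintro y ⟨t, ht, rfl⟩; exact abs_nonneg _)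
  · intro n
    apply Real.sSup_le
    · rintro y ⟨t, ht, rfl⟩
      exact key n t ht
    · positivity
  · have h1 : Tendsto (fun n => |d n - dstar|) atTop (nhds 0) := by
      have := (hd.sub_const dstar).abs
      simpa using this
    have h2 : Tendsto (fun n => |d n - dstar| / (2 * u) * C) atTop (nhds 0) := by
      have := (h1.div_const (2 * u)).mul_const C
      simpa using this
    exact h2
end

section
/- Binomial tail bound for adapted events with uniformly positive conditional probability (used in the proof of Lemma 4.5 of the paper): let (Ω, 𝒜, P) be a probability space, let ℱ_0 ⊆ ℱ_1 ⊆ ⋯ ⊆ ℱ_N ⊆ 𝒜 be a filtration, let p ∈ [0,1], and for each k ∈ {1, …, N} let A_k ∈ ℱ_k be an event such that P-almost surely the conditional probability of A_k given ℱ_{k−1} is at least p. Then for every integer m with 0 ≤ m ≤ N, P[∑_{k=1}^N 1_{A_k} ≤ m] ≤ ∑_{j=0}^m (N choose j) · p^j · (1 − p)^{N − j}. -/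
open MeasureTheory

lemma btba_F_eq_one (p : ℝ) {n m : ℕ} (h : n ≤ m) :
    ∑ j ∈ Finset.range (m+1), (n.choose j : ℝ) * p ^ j * (1-p) ^ (n-j) = 1 := by
  have hsub : Finset.range (n+1) ⊆ Finset.range (m+1) := Finset.range_subset_range.2 (by omega)
  rw [← Finset.sum_subset hsub (by
    intro j hj hj'
    simp only [Finset.mem_range] at hj hj'
    rw [Nat.choose_eq_zero_of_lt (by omega)]
    simp)]
  have key : ∑ j ∈ Finset.range (n+1), (n.choose j : ℝ) * p ^ j * (1-p) ^ (n-j)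
      = (p + (1-p)) ^ n := by
    rw [add_pow]
    exact Finset.sum_congr rfl fun j _ => by ring
  rw [key]
  norm_num

lemma btba_F_pascal (p : ℝ) {n m : ℕ} (h : m + 1 ≤ n) :
    ∑ j ∈ Finset.range (m+2), ((n+1).choose j : ℝ) * p ^ j * (1-p) ^ (n+1-j)
      = p * ∑ j ∈ Finset.range (m+1), (n.choose j : ℝ) * p ^ j * (1-p) ^ (n-j)
        + (1-p) * ∑ j ∈ Finset.range (m+2), (n.choose j : ℝ) * p ^ j * (1-p) ^ (n-j) := by
  rw [Finset.sum_range_succ' (fun j => ((n+1).choose j : ℝ) * p ^ j * (1-p) ^ (n+1-j)) (m+1),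
      Finset.sum_range_succ' (fun j => ((n).choose j : ℝ) * p ^ j * (1-p) ^ (n-j)) (m+1)]
  have hterm : ∀ i ∈ Finset.range (m+1),
      ((n+1).choose (i+1) : ℝ) * p ^ (i+1) * (1-p) ^ (n+1-(i+1))
        = p * ((n.choose i : ℝ) * p ^ i * (1-p) ^ (n-i))
          + (1-p) * ((n.choose (i+1) : ℝ) * p ^ (i+1) * (1-p) ^ (n-(i+1))) := by
    intro i hi
    simp only [Finset.mem_range] at hi
    have h1 : n + 1 - (i+1) = n - i := by omega
    have h2 : n - i = (n - (i+1)) + 1 := by omega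
    rw [h1, Nat.choose_succ_succ, h2, pow_succ]
    push_cast
    ring
  rw [Finset.sum_congr rfl hterm, Finset.sum_add_distrib, ← Finset.mul_sum, ← Finset.mul_sum]
  have hlast : (((n+1).choose 0 : ℕ) : ℝ) * p ^ 0 * (1-p) ^ (n+1-0)
      = (1-p) * ((n.choose 0 : ℝ) * p ^ 0 * (1-p) ^ (n-0)) := by
    simp only [Nat.choose_zero_right, Nat.cast_one, one_mul, pow_zero, Nat.sub_zero]
    rw [pow_succ]; ring
  rw [hlast]
  ring

/-- **Binomial tail bound for adapted events with uniformly positive conditional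
probability** (used in the proof of Lemma 4.5): if `ℱ_0 ⊆ ⋯ ⊆ ℱ_N` is a filtration,
`A_k ∈ ℱ_k` for `1 ≤ k ≤ N`, and a.s. `P[A_k | ℱ_{k-1}] ≥ p`, then for `0 ≤ m ≤ N`,
`P[∑_{k=1}^N 1_{A_k} ≤ m] ≤ ∑_{j=0}^m (N choose j) p^j (1-p)^{N-j}`. -/
theorem binomial_tail_bound_adapted {Ω : Type*} [m0 : MeasurableSpace Ω]
    (P : Measure Ω) [IsProbabilityMeasure P] (N : ℕ)
    (ℱ : ℕ → MeasurableSpace Ω)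
    (hmono : ∀ i j, i ≤ j → j ≤ N → ℱ i ≤ ℱ j)
    (hle : ∀ k ≤ N, ℱ k ≤ m0)
    (p : ℝ) (hp : p ∈ Set.Icc (0 : ℝ) 1)
    (A : ℕ → Set Ω) (hA : ∀ k, 1 ≤ k → k ≤ N → MeasurableSet[ℱ k] (A k))
    (hcond : ∀ k, 1 ≤ k → k ≤ N →
      ∀ᵐ ω ∂P, p ≤ (P[(A k).indicator (fun _ => (1 : ℝ)) | ℱ (k - 1)]) ω) :
    ∀ m : ℕ, m ≤ N →
      P {ω | ∑ k ∈ Finset.Icc 1 N, (A k).indicator (fun _ => (1 : ℝ)) ω ≤ (m : ℝ)} ≤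
        ENNReal.ofReal
          (∑ j ∈ Finset.range (m + 1), (N.choose j : ℝ) * p ^ j * (1 - p) ^ (N - j)) := by
  obtain ⟨hp0, hp1⟩ := hp
  set S : ℕ → Ω → ℝ := fun n ω => ∑ k ∈ Finset.Icc 1 n, (A k).indicator (fun _ => (1:ℝ)) ω
    with hSdef
  have hAm0 : ∀ k, 1 ≤ k → k ≤ N → MeasurableSet (A k) := fun k h1 h2 => hle k h2 _ (hA k h1 h2)
  have hSmeas : ∀ n, n ≤ N → Measurable[ℱ n] (S n) := by
    intro n hn
    apply Finset.measurable_sum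
    intro k hk
    simp only [Finset.mem_Icc] at hk
    exact Measurable.indicator measurable_const (hmono k n hk.2 hn _ (hA k hk.1 (hk.2.trans hn)))
  have hTmeas : ∀ n, n ≤ N → ∀ c : ℝ, MeasurableSet[ℱ n] {ω | S n ω ≤ c} := by
    intro n hn c
    exact measurableSet_le (hSmeas n hn) measurable_const
  have hSsucc : ∀ n ω, S (n+1) ω = S n ω + (A (n+1)).indicator (fun _ => (1:ℝ)) ω := by
    intro n ω
    simp only [hSdef]
    rw [Finset.sum_Icc_succ_top (by omega : 1 ≤ n+1)]
  have hSnonneg : ∀ n ω, 0 ≤ S n ω := by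
    intro n ω
    apply Finset.sum_nonneg
    intro k _
    exact Set.indicator_nonneg (fun _ _ => zero_le_one) ω
  -- key conditional-probability step
  have hstep : ∀ n, n + 1 ≤ N → ∀ B : Set Ω, MeasurableSet[ℱ n] B →
      (P (B ∩ (A (n+1))ᶜ)).toReal ≤ (1 - p) * (P B).toReal := by
    intro n hn B hB
    have hBm0 : MeasurableSet B := hle n (by omega) _ hB
    have hAm : MeasurableSet (A (n+1)) := hAm0 (n+1) (by omega) hn
    have hf : Integrable ((A (n+1)).indicator (fun _ => (1:ℝ))) P :=
      (integrable_const (1:ℝ)).indicator hAm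
    have h1 : ∫ ω in B, (A (n+1)).indicator (fun _ => (1:ℝ)) ω ∂P
        = (P (B ∩ A (n+1))).toReal := by
      rw [setIntegral_indicator hAm]
      simp
      rfl
    have h2 : ∫ ω in B, (A (n+1)).indicator (fun _ => (1:ℝ)) ω ∂P
        = ∫ ω in B, (P[(A (n+1)).indicator (fun _ => (1:ℝ)) | ℱ n]) ω ∂P :=
      (setIntegral_condExp (hle n (by omega)) hf hB).symm
    have h3 : p * (P B).toReal
        ≤ ∫ ω in B, (P[(A (n+1)).indicator (fun _ => (1:ℝ)) | ℱ n]) ω ∂P := by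
      have hc := hcond (n+1) (by omega) hn
      simp only [Nat.add_sub_cancel] at hc
      calc p * (P B).toReal = ∫ _ in B, p ∂P := by rw [setIntegral_const, smul_eq_mul, measureReal_def]; ring
        _ ≤ _ := setIntegral_mono_ae (integrableOn_const (measure_ne_top P B))
            integrable_condExp.integrableOn hc
    have h4 : (P (B ∩ A (n+1))).toReal + (P (B ∩ (A (n+1))ᶜ)).toReal = (P B).toReal := by
      rw [← ENNReal.toReal_add (measure_ne_top P _) (measure_ne_top P _), ← Set.diff_eq,
        measure_inter_add_diff B hAm]
    have h5 : p * (P B).toReal ≤ (P (B ∩ A (n+1))).toReal := by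
      rw [← h1]; rw [h2]; exact h3
    linarith
  -- main induction
  have key : ∀ n, n ≤ N → ∀ m : ℕ,
      (P {ω | S n ω ≤ (m:ℝ)}).toReal
        ≤ ∑ j ∈ Finset.range (m+1), (n.choose j : ℝ) * p ^ j * (1-p) ^ (n-j) := by
    intro n
    induction n with
    | zero =>
      intro _ m
      have hset : {ω | S 0 ω ≤ (m:ℝ)} = Set.univ := by
        ext ω
        simp [hSdef]
      rw [hset, btba_F_eq_one p (Nat.zero_le m)]
      simp
    | succ n ih =>
      intro hn m
      have hn' : n ≤ N := by omega
      have ihm := ih hn'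
      have hprob1 : ∀ s : Set Ω, (P s).toReal ≤ 1 := by
        intro s
        have := ENNReal.toReal_mono (by simp) (prob_le_one (μ := P) (s := s))
        simpa using this
      rcases le_or_gt (n+1) m with hcase | hcase
      · rw [btba_F_eq_one p hcase]
        exact hprob1 _
      · -- m ≤ n
        match m with
        | 0 =>
          have hset : {ω | S (n+1) ω ≤ ((0:ℕ):ℝ)} = {ω | S n ω ≤ ((0:ℕ):ℝ)} ∩ (A (n+1))ᶜ := by
            ext ω
            simp only [Set.mem_setOf_eq, Set.mem_inter_iff, Set.mem_compl_iff, Nat.cast_zero]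
            have hs := hSsucc n ω
            have h0 := hSnonneg n ω
            by_cases hω : ω ∈ A (n+1)
            · rw [Set.indicator_of_mem hω] at hs
              constructor
              · intro h; exfalso; linarith
              · rintro ⟨h, hc⟩; exact absurd hω hc
            · rw [Set.indicator_of_notMem hω] at hs
              constructor
              · intro h; exact ⟨by linarith, hω⟩
              · rintro ⟨h, _⟩; linarith
          rw [hset]
          have h1 := hstep n hn _ (hTmeas n hn' ((0:ℕ):ℝ))
          have h2 := mul_le_mul_of_nonneg_left (ihm 0) (by linarith : (0:ℝ) ≤ 1 - p)
          have h3 : (1-p) * ∑ j ∈ Finset.range (0+1), (n.choose j : ℝ) * p ^ j * (1-p) ^ (n-j)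
              = ∑ j ∈ Finset.range (0+1), ((n+1).choose j : ℝ) * p ^ j * (1-p) ^ (n+1-j) := by
            norm_num [Finset.sum_range_one, pow_succ]
            ring
          calc (P ({ω | S n ω ≤ ((0:ℕ):ℝ)} ∩ (A (n+1))ᶜ)).toReal
              ≤ (1-p) * (P {ω | S n ω ≤ ((0:ℕ):ℝ)}).toReal := h1
            _ ≤ (1-p) * ∑ j ∈ Finset.range (0+1), (n.choose j : ℝ) * p ^ j * (1-p) ^ (n-j) := h2
            _ = _ := h3
        | (m'+1) =>
          have hmn : m' + 1 ≤ n := by omega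
          set T' := {ω | S n ω ≤ ((m':ℕ):ℝ)} with hT'def
          set T := {ω | S n ω ≤ ((m'+1:ℕ):ℝ)} with hTdef
          have hsub : T' ⊆ T := by
            intro ω hω
            have h : S n ω ≤ ((m':ℕ) : ℝ) := hω
            show S n ω ≤ ((m'+1:ℕ) : ℝ)
            push_cast at h ⊢
            linarith
          have hset : {ω | S (n+1) ω ≤ ((m'+1:ℕ):ℝ)} = T' ∪ ((T \ T') ∩ (A (n+1))ᶜ) := by
            ext ω
            simp only [hT'def, hTdef, Set.mem_setOf_eq, Set.mem_union, Set.mem_inter_iff,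
              Set.mem_diff, Set.mem_compl_iff]
            have hs := hSsucc n ω
            push_cast at *
            by_cases hω : ω ∈ A (n+1)
            · rw [Set.indicator_of_mem hω] at hs
              constructor
              · intro h; left; linarith
              · rintro (h | ⟨⟨h1, h2⟩, hc⟩)
                · linarith
                · exact absurd hω hc
            · rw [Set.indicator_of_notMem hω] at hs
              constructor
              · intro h
                by_cases h' : S n ω ≤ (m' : ℝ)
                · left; exact h'
                · right; exact ⟨⟨by linarith, h'⟩, hω⟩
              · rintro (h | ⟨⟨h1, h2⟩, hc⟩) <;> linarith
          rw [hset]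
          have hT'm0 : MeasurableSet T' := hle n hn' _ (hTmeas n hn' _)
          have hTm0 : MeasurableSet T := hle n hn' _ (hTmeas n hn' _)
          have hunion : (P (T' ∪ ((T \ T') ∩ (A (n+1))ᶜ))).toReal
              ≤ (P T').toReal + (P ((T \ T') ∩ (A (n+1))ᶜ)).toReal := by
            rw [← ENNReal.toReal_add (measure_ne_top P _) (measure_ne_top P _)]
            exact ENNReal.toReal_mono
              (by exact ENNReal.add_ne_top.2 ⟨measure_ne_top P _, measure_ne_top P _⟩)
              (measure_union_le _ _)
          have hdiffmeas : MeasurableSet[ℱ n] (T \ T') :=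
            (hTmeas n hn' _).diff (hTmeas n hn' _)
          have hd := hstep n hn _ hdiffmeas
          have hdiffval : (P (T \ T')).toReal = (P T).toReal - (P T').toReal := by
            rw [measure_diff hsub hT'm0.nullMeasurableSet (measure_ne_top P _),
              ENNReal.toReal_sub_of_le (measure_mono hsub) (measure_ne_top P _)]
          have hb1 := mul_le_mul_of_nonneg_left (ihm m') hp0
          have hb2 := mul_le_mul_of_nonneg_left (ihm (m'+1)) (by linarith : (0:ℝ) ≤ 1 - p)
          rw [btba_F_pascal p hmn]
          have hT'le : (P T').toReal ≤ (P T).toReal :=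
            ENNReal.toReal_mono (measure_ne_top P _) (measure_mono hsub)
          nlinarith [hunion, hd, hdiffval]
  intro m hm
  rw [← ENNReal.ofReal_toReal (measure_ne_top P _)]
  exact ENNReal.ofReal_le_ofReal (key N le_rfl m)
end

section
/- Hölder-type modulus of continuity for area-parameterized curves that fill balls (the deterministic core of Proposition 5.1 of the paper): let R > 0, r ∈ (0,1), δ₀ ∈ (0,1], and let η : ℝ → ℂ be a continuous curve parameterized by Lebesgue measure. Assume that for every δ ∈ (0, δ₀] and all real numbers a < b such that η([a,b]) ⊆ B(0,R) and the diameter of η([a,b]) is at least δ^{1−r}, the set η([a,b]) contains an open ball of radius δ. Then for all real numbers a ≤ b with b − a ≤ π δ₀²/2 and η([a,b]) ⊆ B(0,R), one has |η(b) − η(a)| ≤ (2(b − a)/π)^{(1−r)/2}. -/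
open MeasureTheory

/-- **Hölder-type modulus of continuity for area-parameterized curves that fill balls**
(the deterministic core of Proposition 5.1): if `η : ℝ → ℂ` is a continuous curve
parameterized by Lebesgue measure and for every `δ ∈ (0, δ₀]` each segment of `η` inside
`B(0,R)` whose diameter is at least `δ^{1-r}` contains a ball of radius `δ`, then for all
`a ≤ b` with `b - a ≤ π δ₀²/2` and `η([a,b]) ⊆ B(0,R)` we have
`|η b - η a| ≤ (2(b-a)/π)^{(1-r)/2}`. -/
theorem holder_modulus_of_ball_filling (R r δ₀ : ℝ) (hR : 0 < R)
    (hr : r ∈ Set.Ioo (0 : ℝ) 1) (hδ₀ : δ₀ ∈ Set.Ioc (0 : ℝ) 1)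
    (η : ℝ → ℂ) (hcont : Continuous η)
    (harea : ∀ a b : ℝ, a ≤ b → volume (η '' Set.Icc a b) = ENNReal.ofReal (b - a))
    (hfill : ∀ δ ∈ Set.Ioc (0 : ℝ) δ₀, ∀ a b : ℝ, a < b →
      η '' Set.Icc a b ⊆ Metric.ball (0 : ℂ) R →
      δ ^ (1 - r) ≤ Metric.diam (η '' Set.Icc a b) →
      ∃ z : ℂ, Metric.ball z δ ⊆ η '' Set.Icc a b) :
    ∀ a b : ℝ, a ≤ b → b - a ≤ Real.pi * δ₀ ^ 2 / 2 →
      η '' Set.Icc a b ⊆ Metric.ball (0 : ℂ) R →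
      ‖η b - η a‖ ≤ (2 * (b - a) / Real.pi) ^ ((1 - r) / 2) := by
  intro a b hab hsmall hsub
  rcases eq_or_lt_of_le hab with rfl | hab'
  · simpa using Real.rpow_nonneg (by positivity) _
  -- set up δ
  set x := 2 * (b - a) / Real.pi with hx
  have hπ : (0 : ℝ) < Real.pi := Real.pi_pos
  have hxpos : 0 < x := div_pos (by linarith) hπ
  set δ := Real.sqrt x with hδ
  have hδpos : 0 < δ := Real.sqrt_pos.mpr hxpos
  have hδle : δ ≤ δ₀ := by
    rw [hδ, show δ₀ = Real.sqrt (δ₀ ^ 2) from (Real.sqrt_sq hδ₀.1.le).symm]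
    apply Real.sqrt_le_sqrt
    rw [hx, div_le_iff₀ hπ]
    nlinarith
  have hkey : δ ^ (1 - r) = x ^ ((1 - r) / 2) := by
    rw [hδ, Real.sqrt_eq_rpow, ← Real.rpow_mul hxpos.le]
    ring_nf
  by_contra hcon
  push_neg at hcon
  have hdiam : δ ^ (1 - r) ≤ Metric.diam (η '' Set.Icc a b) := by
    rw [hkey]
    refine le_trans hcon.le ?_
    have hb : η b ∈ η '' Set.Icc a b := ⟨b, Set.right_mem_Icc.mpr hab, rfl⟩
    have ha : η a ∈ η '' Set.Icc a b := ⟨a, Set.left_mem_Icc.mpr hab, rfl⟩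
    have hbd : Bornology.IsBounded (η '' Set.Icc a b) :=
      Metric.isBounded_ball.subset hsub
    simpa [Complex.dist_eq] using Metric.dist_le_diam_of_mem hbd hb ha
  obtain ⟨z, hz⟩ := hfill δ ⟨hδpos, hδle⟩ a b hab' hsub hdiam
  have hvol : volume (Metric.ball z δ) ≤ volume (η '' Set.Icc a b) :=
    measure_mono hz
  rw [Complex.volume_ball, harea a b hab] at hvol
  have : ENNReal.ofReal δ ^ 2 * NNReal.pi = ENNReal.ofReal (2 * (b - a)) := by
    rw [← ENNReal.ofReal_pow hδpos.le, hδ, Real.sq_sqrt hxpos.le, hx]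
    rw [← ENNReal.ofReal_coe_nnreal, ← ENNReal.ofReal_mul (by positivity)]
    congr 1
    rw [NNReal.coe_real_pi]
    field_simp
  rw [this] at hvol
  have := (ENNReal.ofReal_le_ofReal_iff (by linarith)).mp hvol
  linarith
end
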